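/- arXiv:2005.01067 — 3 statements merged into one kernel-verified Lean document; each statement's English description precedes it below -/
import Mathlib

section
/- Let s, n, N be positive integers with n ≥ 2 and s·n odd. Then for every j ∈ {0,1,...,N−1}, M_{s,n,N}(j) = ((2i)^{sn+1}/N) · Σ_{r=1}^{⌊N/2⌋} sin(πr(2j − N_{s,n})/N) · ∏_{a=1}^{n} sin^s(πar/N), where i is the imaginary unit and N_{s,n} = s·n(n+1)/2. -/
set_option maxHeartbeats 1000000

/-- `T s n` is the polynomial `∏_{j=1}^{n} (1 - q^j)^s`. -/
noncomputable def T (s n : ℕ) : Polynomial ℤ :=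
  ∏ j ∈ Finset.Icc 1 n, (1 - Polynomial.X ^ j) ^ s

/-- `Nsn s n = s·n(n+1)/2`, the degree of `T s n`. -/
def Nsn (s n : ℕ) : ℕ := s * n * (n + 1) / 2

/-- `M s n N j = Σ_{0 ≤ i ≤ N_{s,n}, i ≡ j (mod N)} t_{i,s,n}`. -/
noncomputable def M (s n N j : ℕ) : ℤ :=
  ∑ i ∈ (Finset.range (Nsn s n + 1)).filter (fun i => i % N = j), (T s n).coeff i

open Finset Complex Polynomial

noncomputable def Pr (s n N r : ℕ) : ℂ :=
  ∏ a ∈ Finset.Icc 1 n, (Real.sin (Real.pi * a * r / N) : ℂ) ^ s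

lemma gauss_icc (n : ℕ) : (∑ a ∈ Finset.Icc 1 n, a) * 2 = n * (n + 1) := by
  induction n with
  | zero => simp
  | succ m ih =>
      rw [Finset.sum_Icc_succ_top (by omega)]
      ring_nf
      ring_nf at ih
      omega

lemma nsn_eq (s n : ℕ) : s * (∑ a ∈ Finset.Icc 1 n, a) = Nsn s n := by
  have h := gauss_icc n
  have h2 : s * n * (n + 1) = s * (∑ a ∈ Finset.Icc 1 n, a) * 2 := by
    rw [mul_assoc, ← h]; ring
  rw [Nsn, h2, Nat.mul_div_cancel _ (by norm_num)]

lemma natDegree_T_le (s n : ℕ) : (T s n).natDegree ≤ Nsn s n := by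
  unfold T
  refine le_trans (Polynomial.natDegree_prod_le _ _) ?_
  refine le_trans (Finset.sum_le_sum (g := fun a => s * a) ?_) ?_
  · intro a _
    refine le_trans Polynomial.natDegree_pow_le (Nat.mul_le_mul_left s ?_)
    refine le_trans (Polynomial.natDegree_sub_le _ _) ?_
    simp [Polynomial.natDegree_X_pow]
  · rw [← Finset.mul_sum, nsn_eq]

lemma exp_sub_exp (θ : ℝ) :
    Complex.exp (θ * Complex.I) - Complex.exp (-(θ * Complex.I)) =
      2 * Complex.I * Real.sin θ := by
  have h1 := Complex.exp_mul_I (θ : ℂ)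
  have h2 := Complex.exp_mul_I (-(θ : ℂ))
  rw [neg_mul_eq_neg_mul] at *
  rw [h1, h2, Complex.cos_neg, Complex.sin_neg, Complex.ofReal_sin]
  ring

lemma one_sub_exp (θ : ℝ) :
    1 - Complex.exp (2 * θ * Complex.I) =
      -2 * Complex.I * Real.sin θ * Complex.exp (θ * Complex.I) := by
  have h := exp_sub_exp θ
  have h3 : Complex.exp (θ * Complex.I) * Complex.exp (-(θ * Complex.I)) = 1 := by
    rw [← Complex.exp_add]; simp
  have h4 : Complex.exp (2 * θ * Complex.I) =
      Complex.exp (θ * Complex.I) * Complex.exp (θ * Complex.I) := by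
    rw [← Complex.exp_add]; ring_nf
  calc 1 - Complex.exp (2 * θ * Complex.I)
      = Complex.exp (θ * Complex.I) *
          (Complex.exp (-(θ * Complex.I)) - Complex.exp (θ * Complex.I)) := by
        rw [mul_sub, h3, h4]
    _ = -2 * Complex.I * Real.sin θ * Complex.exp (θ * Complex.I) := by
        rw [show Complex.exp (-(θ * Complex.I)) - Complex.exp (θ * Complex.I) =
          -(Complex.exp (θ * Complex.I) - Complex.exp (-(θ * Complex.I))) by ring, h]
        ring

lemma sum_exp_eq (N : ℕ) (hN : 0 < N) (k : ℤ) :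
    ∑ r ∈ Finset.range N, Complex.exp (2 * Real.pi * Complex.I * k / N) ^ r
      = if (N : ℤ) ∣ k then (N : ℂ) else 0 := by
  have hN' : (N : ℂ) ≠ 0 := Nat.cast_ne_zero.mpr hN.ne'
  have hπ : (Real.pi : ℂ) ≠ 0 := Complex.ofReal_ne_zero.mpr Real.pi_ne_zero
  have hone : Complex.exp (2 * Real.pi * Complex.I * k / N) = 1 ↔ (N : ℤ) ∣ k := by
    rw [Complex.exp_eq_one_iff]
    constructor
    · rintro ⟨m, hm⟩
      refine ⟨m, ?_⟩
      have h2πI : (2 * (Real.pi : ℂ) * Complex.I) ≠ 0 :=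
        mul_ne_zero (mul_ne_zero two_ne_zero hπ) I_ne_zero
      have h2 : (k : ℂ) = (m : ℂ) * N := by
        field_simp at hm
        apply mul_left_cancel₀ h2πI
        linear_combination (2 * (Real.pi : ℂ) * Complex.I) * hm
      have h3 : k = m * N := by exact_mod_cast h2
      rw [h3, mul_comm]
    · rintro ⟨m, rfl⟩
      exact ⟨m, by field_simp; push_cast; ring⟩
  split_ifs with h
  · have := hone.mpr h
    simp [this]
  · have hz : Complex.exp (2 * Real.pi * Complex.I * k / N) ≠ 1 := fun hh => h (hone.mp hh)
    rw [geom_sum_eq hz, ← Complex.exp_nat_mul]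
    have : (N : ℂ) * (2 * Real.pi * Complex.I * k / N) = (k : ℤ) * (2 * Real.pi * Complex.I) := by
      field_simp
    rw [this, Complex.exp_int_mul, Complex.exp_two_pi_mul_I, one_zpow]
    simp

lemma keyA (s n N j : ℕ) (hN : 0 < N) (hj : j < N) :
    (N : ℂ) * (M s n N j : ℂ) = ∑ r ∈ Finset.range N,
      Complex.exp (-(2 * Real.pi * Complex.I * j * r / N)) *
        ∏ a ∈ Finset.Icc 1 n,
          (1 - Complex.exp (2 * Real.pi * Complex.I * r / N) ^ a) ^ s := by
  have hdeg : ((T s n).map (Int.castRingHom ℂ)).natDegree < Nsn s n + 1 :=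
    lt_of_le_of_lt (le_trans Polynomial.natDegree_map_le (natDegree_T_le s n))
      (Nat.lt_succ_self _)
  have heval : ∀ x : ℂ, ∏ a ∈ Finset.Icc 1 n, (1 - x ^ a) ^ s
      = ∑ i ∈ Finset.range (Nsn s n + 1), ((T s n).coeff i : ℂ) * x ^ i := by
    intro x
    have h1 : Polynomial.eval x ((T s n).map (Int.castRingHom ℂ))
        = ∏ a ∈ Finset.Icc 1 n, (1 - x ^ a) ^ s := by
      simp [T, Polynomial.map_prod, Polynomial.map_pow, Polynomial.map_sub,
        Polynomial.eval_prod]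
    rw [← h1, Polynomial.eval_eq_sum_range' hdeg]
    refine Finset.sum_congr rfl fun i _ => ?_
    rw [Polynomial.coeff_map]
    simp
  have hmod : ∀ i : ℕ, (i % N = j) ↔ ((N : ℤ) ∣ ((i : ℤ) - (j : ℤ))) := by
    intro i
    rw [← Nat.modEq_iff_dvd]
    unfold Nat.ModEq
    rw [Nat.mod_eq_of_lt hj]
    exact eq_comm
  have hswap : (∑ r ∈ Finset.range N,
      Complex.exp (-(2 * Real.pi * Complex.I * j * r / N)) *
        ∏ a ∈ Finset.Icc 1 n,
          (1 - Complex.exp (2 * Real.pi * Complex.I * r / N) ^ a) ^ s)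
      = ∑ i ∈ Finset.range (Nsn s n + 1), ((T s n).coeff i : ℂ) *
          (if (N : ℤ) ∣ ((i : ℤ) - (j : ℤ)) then (N : ℂ) else 0) := by
    calc (∑ r ∈ Finset.range N,
        Complex.exp (-(2 * Real.pi * Complex.I * j * r / N)) *
          ∏ a ∈ Finset.Icc 1 n,
            (1 - Complex.exp (2 * Real.pi * Complex.I * r / N) ^ a) ^ s)
        = ∑ r ∈ Finset.range N, ∑ i ∈ Finset.range (Nsn s n + 1),
            Complex.exp (-(2 * Real.pi * Complex.I * j * r / N)) *
              (((T s n).coeff i : ℂ) * Complex.exp (2 * Real.pi * Complex.I * r / N) ^ i) := by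
          refine Finset.sum_congr rfl fun r _ => ?_
          rw [heval, Finset.mul_sum]
      _ = ∑ i ∈ Finset.range (Nsn s n + 1), ∑ r ∈ Finset.range N,
            Complex.exp (-(2 * Real.pi * Complex.I * j * r / N)) *
              (((T s n).coeff i : ℂ) * Complex.exp (2 * Real.pi * Complex.I * r / N) ^ i) :=
          Finset.sum_comm
      _ = ∑ i ∈ Finset.range (Nsn s n + 1), ((T s n).coeff i : ℂ) *
            (if (N : ℤ) ∣ ((i : ℤ) - (j : ℤ)) then (N : ℂ) else 0) := by
          refine Finset.sum_congr rfl fun i _ => ?_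
          have hpt : ∀ r ∈ Finset.range N,
              Complex.exp (-(2 * Real.pi * Complex.I * j * r / N)) *
                (((T s n).coeff i : ℂ) * Complex.exp (2 * Real.pi * Complex.I * r / N) ^ i)
              = ((T s n).coeff i : ℂ) *
                  Complex.exp (2 * Real.pi * Complex.I * (((i : ℤ) - (j : ℤ)) : ℤ) / N) ^ r := by
            intro r _
            rw [← Complex.exp_nat_mul, ← Complex.exp_nat_mul]
            rw [show Complex.exp (-(2 * Real.pi * Complex.I * j * r / N)) *
                (((T s n).coeff i : ℂ) * Complex.exp ((i : ℂ) * (2 * Real.pi * Complex.I * r / N)))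
                = ((T s n).coeff i : ℂ) *
                  (Complex.exp (-(2 * Real.pi * Complex.I * j * r / N)) *
                    Complex.exp ((i : ℂ) * (2 * Real.pi * Complex.I * r / N))) from by ring,
              ← Complex.exp_add]
            congr 2
            push_cast
            ring
          rw [Finset.sum_congr rfl hpt, ← Finset.mul_sum, sum_exp_eq N hN ((i : ℤ) - (j : ℤ))]
  rw [hswap]
  unfold M
  push_cast
  rw [Finset.sum_filter, Finset.mul_sum]
  refine Finset.sum_congr rfl fun i _ => ?_
  simp only [hmod i]
  split_ifs with h
  · push_cast; ring
  · ring

lemma keyB (s n N : ℕ) (hN : 0 < N) (r : ℕ) :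
    ∏ a ∈ Finset.Icc 1 n, (1 - Complex.exp (2 * Real.pi * Complex.I * r / N) ^ a) ^ s
      = (-2 * Complex.I) ^ (s * n) * Pr s n N r *
          Complex.exp (Real.pi * Complex.I * r * (Nsn s n) / N) := by
  have hfac : ∀ a ∈ Finset.Icc 1 n,
      (1 - Complex.exp (2 * Real.pi * Complex.I * r / N) ^ a) ^ s
      = ((-2 * Complex.I) ^ s * (Real.sin (Real.pi * a * r / N) : ℂ) ^ s) *
          Complex.exp ((s : ℂ) * ((Real.pi * a * r / N : ℝ) : ℂ) * Complex.I) := by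
    intro a _
    rw [← Complex.exp_nat_mul]
    rw [show (a : ℂ) * (2 * Real.pi * Complex.I * r / N)
        = 2 * ((Real.pi * a * r / N : ℝ) : ℂ) * Complex.I from by push_cast; ring]
    rw [one_sub_exp]
    rw [mul_pow, mul_pow, ← Complex.exp_nat_mul]
    rw [show (s : ℂ) * (((Real.pi * a * r / N : ℝ) : ℂ) * Complex.I)
        = (s : ℂ) * ((Real.pi * a * r / N : ℝ) : ℂ) * Complex.I from (mul_assoc _ _ _).symm]
  rw [Finset.prod_congr rfl hfac, Finset.prod_mul_distrib, Finset.prod_mul_distrib,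
    ← Complex.exp_sum, Finset.prod_const, Nat.card_Icc, Nat.add_sub_cancel, ← pow_mul]
  have hexpeq : ∑ a ∈ Finset.Icc 1 n, (s : ℂ) * ((Real.pi * a * r / N : ℝ) : ℂ) * Complex.I
      = Real.pi * Complex.I * r * (Nsn s n) / N := by
    calc ∑ a ∈ Finset.Icc 1 n, (s : ℂ) * ((Real.pi * a * r / N : ℝ) : ℂ) * Complex.I
        = ∑ a ∈ Finset.Icc 1 n, ((s : ℂ) * Real.pi * r * Complex.I / N) * (a : ℂ) :=
          Finset.sum_congr rfl fun a _ => by push_cast; ring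
      _ = ((s : ℂ) * Real.pi * r * Complex.I / N) * ∑ a ∈ Finset.Icc 1 n, (a : ℂ) :=
          (Finset.mul_sum _ _ _).symm
      _ = Real.pi * Complex.I * r * (Nsn s n) / N := by
          rw [← nsn_eq]
          push_cast
          ring
  rw [hexpeq]
  rfl

lemma cos_nat_pi (a : ℕ) : Real.cos (a * Real.pi) = (-1 : ℝ) ^ a := by
  induction a with
  | zero => simp
  | succ m ih =>
      have h : ((m + 1 : ℕ) : ℝ) * Real.pi = m * Real.pi + Real.pi := by push_cast; ring
      rw [h, Real.cos_add_pi, ih, pow_succ]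
      ring

lemma sin_refl (N a r : ℕ) (hN : 0 < N) (hr : r ≤ N) :
    Real.sin (Real.pi * a * ((N - r : ℕ) : ℝ) / N)
      = (-1 : ℝ) ^ (a + 1) * Real.sin (Real.pi * a * r / N) := by
  have hNr : (N : ℝ) ≠ 0 := Nat.cast_ne_zero.mpr hN.ne'
  have hc : ((N - r : ℕ) : ℝ) = (N : ℝ) - r := Nat.cast_sub hr
  rw [hc]
  have harg : Real.pi * a * ((N : ℝ) - r) / N = a * Real.pi - Real.pi * a * r / N := by
    field_simp
  rw [harg, Real.sin_sub, Real.sin_nat_mul_pi, cos_nat_pi, pow_succ]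
  ring

lemma Pr_refl (s n N r : ℕ) (hN : 0 < N) (hr : r ≤ N) :
    Pr s n N (N - r) = (-1 : ℂ) ^ (Nsn s n + s * n) * Pr s n N r := by
  unfold Pr
  have h1 : ∀ a ∈ Finset.Icc 1 n,
      ((Real.sin (Real.pi * a * ((N - r : ℕ)) / N) : ℂ)) ^ s
      = (-1 : ℂ) ^ (s * (a + 1)) * ((Real.sin (Real.pi * a * r / N) : ℂ)) ^ s := by
    intro a _
    rw [sin_refl N a r hN hr]
    push_cast
    rw [mul_pow, ← pow_mul, mul_comm (a + 1) s]
  rw [Finset.prod_congr rfl h1, Finset.prod_mul_distrib, Finset.prod_pow_eq_pow_sum]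
  congr 2
  rw [← Finset.mul_sum]
  have h2 : ∑ a ∈ Finset.Icc 1 n, (a + 1) = (∑ a ∈ Finset.Icc 1 n, a) + n := by
    rw [Finset.sum_add_distrib, Finset.sum_const, Nat.card_Icc]
    simp
  rw [h2, Nat.mul_add, nsn_eq]

open Real Complex in
/-- Theorem (main0000, odd case): for `s·n` odd, `n ≥ 2`, `N ≥ 1` and `0 ≤ j < N`,
`M_{s,n,N}(j) = ((2i)^{sn+1}/N) Σ_{r=1}^{⌊N/2⌋} sin(πr(2j - N_{s,n})/N) ∏_{a=1}^{n} sin^s(πar/N)`. -/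
theorem stmt1 (s n N : ℕ) (hs : 0 < s) (hn : 2 ≤ n) (hN : 0 < N) (hodd : Odd (s * n))
    (j : ℕ) (hj : j < N) :
    (M s n N j : ℂ) =
      ((2 * Complex.I) ^ (s * n + 1) / (N : ℂ)) *
        ∑ r ∈ Finset.Icc 1 (N / 2),
          ((Real.sin (Real.pi * r * (2 * (j : ℝ) - (Nsn s n : ℝ)) / N) : ℂ) *
            ∏ a ∈ Finset.Icc 1 n, (Real.sin (Real.pi * a * r / N) : ℂ) ^ s) := by
  have hN' : (N : ℂ) ≠ 0 := Nat.cast_ne_zero.mpr hN.ne'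
  set G' : ℕ → ℂ := fun r => (-2 * Complex.I) ^ (s * n) * Pr s n N r *
      Complex.exp (Real.pi * Complex.I * r * ((Nsn s n : ℂ) - 2 * j) / N) with hG'
  have hF : ∀ r : ℕ, Complex.exp (-(2 * Real.pi * Complex.I * j * r / N)) *
      ∏ a ∈ Finset.Icc 1 n,
        (1 - Complex.exp (2 * Real.pi * Complex.I * r / N) ^ a) ^ s = G' r := by
    intro r
    rw [keyB s n N hN r, hG']
    have h1 : Complex.exp (-(2 * Real.pi * Complex.I * j * r / N)) *
        Complex.exp (Real.pi * Complex.I * r * ((Nsn s n : ℂ)) / N)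
        = Complex.exp (Real.pi * Complex.I * r * ((Nsn s n : ℂ) - 2 * j) / N) := by
      rw [← Complex.exp_add]
      congr 1
      ring
    calc Complex.exp (-(2 * Real.pi * Complex.I * j * r / N)) *
          ((-2 * Complex.I) ^ (s * n) * Pr s n N r *
            Complex.exp (Real.pi * Complex.I * r * ((Nsn s n : ℂ)) / N))
        = (-2 * Complex.I) ^ (s * n) * Pr s n N r *
            (Complex.exp (-(2 * Real.pi * Complex.I * j * r / N)) *
              Complex.exp (Real.pi * Complex.I * r * ((Nsn s n : ℂ)) / N)) := by ring
      _ = (-2 * Complex.I) ^ (s * n) * Pr s n N r *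
            Complex.exp (Real.pi * Complex.I * r * ((Nsn s n : ℂ) - 2 * j) / N) := by rw [h1]
  have hpair : ∀ r : ℕ, r ≤ N → G' r + G' (N - r)
      = (2 * Complex.I) ^ (s * n + 1) *
          ((Real.sin (Real.pi * r * (2 * (j : ℝ) - (Nsn s n : ℝ)) / N) : ℂ) * Pr s n N r) := by
    intro r hr
    have hPrefl := Pr_refl s n N r hN hr
    have hsign : ((-1 : ℂ)) ^ (Nsn s n + s * n) = -(-1 : ℂ) ^ (Nsn s n) := by
      rw [pow_add, Odd.neg_one_pow hodd]; ring
    set θ : ℝ := Real.pi * r * ((Nsn s n : ℝ) - 2 * j) / N with hθdef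
    have hexp1 : Complex.exp (Real.pi * Complex.I * r * ((Nsn s n : ℂ) - 2 * j) / N)
        = Complex.exp (θ * Complex.I) := by
      congr 1
      rw [hθdef]
      push_cast
      ring
    have hcast : ((N - r : ℕ) : ℂ) = (N : ℂ) - r := by
      push_cast [Nat.cast_sub hr]
      norm_num
    have hexp2 : Complex.exp (Real.pi * Complex.I * ((N - r : ℕ) : ℂ) * ((Nsn s n : ℂ) - 2 * j) / N)
        = (-1 : ℂ) ^ (Nsn s n) * Complex.exp (-(θ * Complex.I)) := by
      rw [hcast]
      have hsplit : Real.pi * Complex.I * ((N : ℂ) - r) * ((Nsn s n : ℂ) - 2 * j) / N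
          = (Real.pi * Complex.I * ((Nsn s n : ℂ) - 2 * j))
            + -(Real.pi * Complex.I * r * ((Nsn s n : ℂ) - 2 * j) / N) := by
        field_simp
        ring
      rw [hsplit, Complex.exp_add]
      congr 1
      · rw [show Real.pi * Complex.I * ((Nsn s n : ℂ) - 2 * j)
            = (Nsn s n : ℂ) * (Real.pi * Complex.I) + ((-(j : ℤ) : ℤ) : ℂ) * (2 * Real.pi * Complex.I)
            from by push_cast; ring]
        rw [Complex.exp_add, Complex.exp_nat_mul, Complex.exp_int_mul, Complex.exp_pi_mul_I,
          Complex.exp_two_pi_mul_I, one_zpow, mul_one]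
      · congr 1
        rw [hθdef]
        push_cast
        ring
    have hsq : ((-1 : ℂ) ^ (Nsn s n)) * ((-1 : ℂ) ^ (Nsn s n)) = 1 := by
      rw [← pow_add]
      exact Even.neg_one_pow ⟨Nsn s n, rfl⟩
    have hsin : Real.sin (Real.pi * r * (2 * (j : ℝ) - (Nsn s n : ℝ)) / N) = -Real.sin θ := by
      rw [hθdef, ← Real.sin_neg]
      congr 1
      ring
    have hes := exp_sub_exp θ
    push_cast at hes
    have hneg : (-2 * Complex.I) ^ (s * n) = -((2 * Complex.I) ^ (s * n)) := by
      rw [show (-2 * Complex.I) = -(2 * Complex.I) from by ring, neg_pow,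
        Odd.neg_one_pow hodd]
      ring
    rw [hG']
    simp only []
    rw [hexp1, hexp2, hPrefl, hsign, hsin, hneg, pow_succ]
    push_cast
    linear_combination (-(((2 : ℂ) * Complex.I) ^ (s * n) * Pr s n N r)) * hes +
      (((2 : ℂ) * Complex.I) ^ (s * n) * Pr s n N r * Complex.exp (-(θ * Complex.I))) * hsq
  have hG'0 : G' 0 = 0 := by
    have hPr0 : Pr s n N 0 = 0 := by
      unfold Pr
      refine Finset.prod_eq_zero (i := 1) (Finset.mem_Icc.mpr ⟨le_rfl, by omega⟩) ?_
      have : Real.pi * ((1 : ℕ) : ℝ) * ((0 : ℕ) : ℝ) / N = 0 := by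
        push_cast
        ring
      rw [this, Real.sin_zero, Complex.ofReal_zero]
      exact zero_pow hs.ne'
    simp only [hG']
    rw [hPr0]
    ring
  have hGhalf : N % 2 = 0 → G' (N / 2) = 0 := by
    intro he
    have hPrh : Pr s n N (N / 2) = 0 := by
      unfold Pr
      refine Finset.prod_eq_zero (i := 2) (Finset.mem_Icc.mpr ⟨by omega, hn⟩) ?_
      have h2N : (2 : ℝ) * ((N / 2 : ℕ) : ℝ) = N := by
        have : 2 * (N / 2) = N := by omega
        exact_mod_cast this
      have harg : Real.pi * ((2 : ℕ) : ℝ) * ((N / 2 : ℕ) : ℝ) / N = Real.pi := by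
        have hNr : (N : ℝ) ≠ 0 := Nat.cast_ne_zero.mpr hN.ne'
        push_cast
        rw [mul_assoc, h2N, mul_div_assoc, div_self hNr, mul_one]
      rw [harg, Real.sin_pi, Complex.ofReal_zero]
      exact zero_pow hs.ne'
    simp only [hG']
    rw [hPrh]
    ring
  have hhalf : N / 2 + 1 ≤ N := Nat.div_lt_self hN one_lt_two
  have hstep : ∑ r ∈ Finset.range N, G' r
      = ∑ r ∈ Finset.Ico 1 (N / 2 + 1), (G' r + G' (N - r)) := by
    rw [Finset.range_eq_Ico, ← Finset.sum_Ico_consecutive G' (Nat.zero_le 1) hN]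
    rw [show Finset.Ico 0 1 = {0} from rfl, Finset.sum_singleton, hG'0, zero_add]
    rw [← Finset.sum_Ico_consecutive G' (Nat.le_add_left 1 (N / 2)) hhalf]
    have hbij : ∑ r ∈ Finset.Ico (N / 2 + 1) N, G' r
        = ∑ r ∈ Finset.Ico 1 (N - N / 2), G' (N - r) := by
      refine Finset.sum_nbij' (fun r => N - r) (fun r => N - r) ?_ ?_ ?_ ?_ ?_
      · intro a ha
        simp only [Finset.mem_Ico] at ha ⊢
        omega
      · intro a ha
        simp only [Finset.mem_Ico] at ha ⊢
        omega
      · intro a ha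
        simp only [Finset.mem_Ico] at ha
        omega
      · intro a ha
        simp only [Finset.mem_Ico] at ha
        omega
      · intro a ha
        simp only [Finset.mem_Ico] at ha
        congr 1
        omega
    rw [hbij]
    have hsecond : ∑ r ∈ Finset.Ico 1 (N - N / 2), G' (N - r)
        = ∑ r ∈ Finset.Ico 1 (N / 2 + 1), G' (N - r) := by
      rcases Nat.even_or_odd N with he | ho
      · have hNe : N % 2 = 0 := Nat.even_iff.mp he
        have h1 : N - N / 2 = N / 2 := by omega
        have h2 : 1 ≤ N / 2 := by omega
        rw [h1, Finset.sum_Ico_succ_top h2]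
        have hz : G' (N - N / 2) = 0 := by
          rw [h1]
          exact hGhalf hNe
        rw [hz, add_zero]
      · have hNo : N % 2 = 1 := Nat.odd_iff.mp ho
        have h1 : N - N / 2 = N / 2 + 1 := by omega
        rw [h1]
    rw [hsecond, ← Finset.sum_add_distrib]
  have hmain : (N : ℂ) * (M s n N j : ℂ)
      = (2 * Complex.I) ^ (s * n + 1) *
          ∑ r ∈ Finset.Icc 1 (N / 2),
            ((Real.sin (Real.pi * r * (2 * (j : ℝ) - (Nsn s n : ℝ)) / N) : ℂ) * Pr s n N r) := by
    calc (N : ℂ) * (M s n N j : ℂ)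
        = ∑ r ∈ Finset.range N,
            Complex.exp (-(2 * Real.pi * Complex.I * j * r / N)) *
              ∏ a ∈ Finset.Icc 1 n,
                (1 - Complex.exp (2 * Real.pi * Complex.I * r / N) ^ a) ^ s :=
          keyA s n N j hN hj
      _ = ∑ r ∈ Finset.range N, G' r := Finset.sum_congr rfl fun r _ => hF r
      _ = ∑ r ∈ Finset.Ico 1 (N / 2 + 1), (G' r + G' (N - r)) := hstep
      _ = ∑ r ∈ Finset.Ico 1 (N / 2 + 1),
            (2 * Complex.I) ^ (s * n + 1) *
              ((Real.sin (Real.pi * r * (2 * (j : ℝ) - (Nsn s n : ℝ)) / N) : ℂ) * Pr s n N r) := by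
          refine Finset.sum_congr rfl fun r hr => ?_
          simp only [Finset.mem_Ico] at hr
          exact hpair r (by omega)
      _ = (2 * Complex.I) ^ (s * n + 1) *
            ∑ r ∈ Finset.Icc 1 (N / 2),
              ((Real.sin (Real.pi * r * (2 * (j : ℝ) - (Nsn s n : ℝ)) / N) : ℂ) * Pr s n N r) := by
          rw [Finset.Ico_add_one_right_eq_Icc, Finset.mul_sum]
  unfold Pr at hmain
  rw [div_mul_eq_mul_div, eq_div_iff hN']
  linear_combination hmain
end

section
/- Let s and n be positive integers with s·n odd, let N be a positive integer with N − 1 ≤ N_{s,n}, and let j ∈ {0,1,...,N−1} satisfy 2j ≡ N_{s,n} (mod N). Then M_{s,n,N}(j) = Σ_{0 ≤ i ≤ N_{s,n}, i ≡ j (mod N)} t_{i,s,n} = 0. -/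
open Polynomial

lemma reflect_pow_aux {R : Type*} [CommSemiring R] (f : R[X]) (F s : ℕ)
    (hf : f.natDegree ≤ F) : (f ^ s).reflect (s * F) = (f.reflect F) ^ s := by
  induction s with
  | zero => simp [Polynomial.reflect_one]
  | succ s ih =>
    have hpow : (f ^ s).natDegree ≤ s * F :=
      (Polynomial.natDegree_pow_le).trans (Nat.mul_le_mul_left s hf)
    rw [pow_succ, pow_succ, ← ih, Nat.succ_mul,
      Polynomial.reflect_mul _ _ hpow hf]

lemma reflect_prod_aux {R : Type*} [CommSemiring R] {ι : Type*} (t : Finset ι)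
    (f : ι → R[X]) (d : ι → ℕ) (hf : ∀ i ∈ t, (f i).natDegree ≤ d i) :
    (∏ i ∈ t, f i).reflect (∑ i ∈ t, d i) = ∏ i ∈ t, (f i).reflect (d i) := by
  induction t using Finset.cons_induction with
  | empty => simp [Polynomial.reflect_one]
  | cons a t ha ih =>
    rw [Finset.prod_cons, Finset.prod_cons, Finset.sum_cons,
      Polynomial.reflect_mul _ _ (hf a (Finset.mem_cons_self a t))
        ((Polynomial.natDegree_prod_le t f).trans
          (Finset.sum_le_sum fun i hi => hf i (Finset.mem_cons_of_mem hi))),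
      ih (fun i hi => hf i (Finset.mem_cons_of_mem hi))]

lemma sum_Icc_eq (s n : ℕ) : 2 * ∑ j ∈ Finset.Icc 1 n, s * j = s * n * (n + 1) := by
  induction n with
  | zero => simp
  | succ n ih =>
    rw [Finset.sum_Icc_succ_top (by omega)]
    ring_nf
    ring_nf at ih
    nlinarith [ih]

lemma Nsn_eq_sum (s n : ℕ) : Nsn s n = ∑ j ∈ Finset.Icc 1 n, s * j := by
  have := sum_Icc_eq s n
  unfold Nsn
  omega

lemma reflect_T (s n : ℕ) (hodd : Odd (s * n)) :
    (T s n).reflect (Nsn s n) = -(T s n) := by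
  rw [Nsn_eq_sum, T,
    reflect_prod_aux _ _ _ (fun j hj => ?_)]
  · have key : ∀ j ∈ Finset.Icc 1 n,
        ((1 - X ^ j : ℤ[X]) ^ s).reflect (s * j) = (-1 : ℤ[X]) ^ s * (1 - X ^ j) ^ s := by
      intro j hj
      have hjd : (1 - X ^ j : ℤ[X]).natDegree ≤ j := by
        refine (Polynomial.natDegree_sub_le _ _).trans ?_
        simp [Polynomial.natDegree_X_pow]
      rw [reflect_pow_aux _ _ _ hjd]
      have h1 : (1 - X ^ j : ℤ[X]).reflect j = X ^ j - 1 := by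
        rw [Polynomial.reflect_sub, Polynomial.reflect_one, Polynomial.reflect_monomial,
          Polynomial.revAt_le (le_refl j)]
        simp
      rw [h1]
      rw [show (X ^ j - 1 : ℤ[X]) = -1 * (1 - X ^ j) by ring, mul_pow]
    rw [Finset.prod_congr rfl key, Finset.prod_mul_distrib, Finset.prod_const]
    have hcard : (Finset.Icc 1 n).card = n := by simp
    rw [hcard]
    have : ((-1 : ℤ[X]) ^ s) ^ n = (-1 : ℤ[X]) ^ (s * n) := by rw [← pow_mul]
    rw [this, hodd.neg_one_pow]
    ring
  · exact (Polynomial.natDegree_pow_le).trans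
      (Nat.mul_le_mul_left s ((Polynomial.natDegree_sub_le _ _).trans
        (by simp [Polynomial.natDegree_X_pow])))

lemma coeff_T_sub (s n : ℕ) (hodd : Odd (s * n)) {i : ℕ} (hi : i ≤ Nsn s n) :
    (T s n).coeff (Nsn s n - i) = -(T s n).coeff i := by
  have := Polynomial.coeff_reflect (Nsn s n) (T s n) i
  rw [reflect_T s n hodd, Polynomial.coeff_neg, Polynomial.revAt_le hi] at this
  linarith [this]

/-- Theorem (main000): if `s·n` is odd, `N - 1 ≤ N_{s,n}` and `2j ≡ N_{s,n} (mod N)`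
with `0 ≤ j < N`, then `M_{s,n,N}(j) = 0`. -/
theorem stmt3 (s n N : ℕ) (hs : 0 < s) (hn : 0 < n) (hN : 0 < N) (hodd : Odd (s * n))
    (hNle : N - 1 ≤ Nsn s n) (j : ℕ) (hj : j < N) (hcong : 2 * j ≡ Nsn s n [MOD N]) :
    M s n N j = 0 := by
  set A := (Finset.range (Nsn s n + 1)).filter (fun i => i % N = j) with hA
  have hmem : ∀ i ∈ A, i ≤ Nsn s n ∧ i % N = j := by
    intro i hi
    rw [hA, Finset.mem_filter, Finset.mem_range] at hi
    omega
  have hmap : ∀ i ∈ A, Nsn s n - i ∈ A := by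
    intro i hi
    obtain ⟨hle, hmod⟩ := hmem i hi
    rw [hA, Finset.mem_filter, Finset.mem_range]
    constructor
    · omega
    · -- (Nsn - i) % N = j
      have h1 : Nsn s n - i + i ≡ j + i [MOD N] := by
        rw [Nat.sub_add_cancel hle]
        calc Nsn s n ≡ 2 * j [MOD N] := hcong.symm
          _ = j + j := by ring
          _ ≡ j + i [MOD N] := Nat.ModEq.add_left j (by
              have : i ≡ j [MOD N] := by
                unfold Nat.ModEq; rw [hmod, Nat.mod_eq_of_lt hj]
              exact this.symm)
      have h2 : Nsn s n - i ≡ j [MOD N] := (Nat.ModEq.add_right_cancel' i) h1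
      have := h2.symm
      unfold Nat.ModEq at this
      rw [Nat.mod_eq_of_lt hj] at this
      exact this.symm
  have key : ∑ i ∈ A, (T s n).coeff i = ∑ i ∈ A, -((T s n).coeff i) := by
    refine Finset.sum_nbij' (fun i => Nsn s n - i) (fun i => Nsn s n - i)
      hmap hmap (fun i hi => by have := (hmem i hi).1; omega)
      (fun i hi => by have := (hmem i hi).1; omega) (fun i hi => ?_)
    have h := coeff_T_sub s n hodd (hmem i hi).1
    simp only [h, neg_neg]
  have hM : M s n N j = ∑ i ∈ A, (T s n).coeff i := rfl
  rw [Finset.sum_neg_distrib] at key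
  rw [hM]
  linarith [key]
end

section
/- For every positive integer n, Σ_{ℓ=0}^{12n} τ_n(ℓ(n+1)) = (n+1)^{23}·φ(n+1), where φ is Euler's totient function; that is, the sum of the coefficients of ∏_{k=1}^{n}(1−q^k)^{24} at exponents divisible by n+1 equals (n+1)^{23}·φ(n+1). -/
/-- `tau n j` is the coefficient `τ_n(j)` of `q^j` in `∏_{k=1}^{n} (1 - q^k)^{24}`. -/
noncomputable def tau (n j : ℕ) : ℤ :=
  (∏ k ∈ Finset.Icc 1 n, (1 - Polynomial.X ^ k) ^ 24 : Polynomial ℤ).coeff j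

lemma sum_Icc_one_mul_two (n : ℕ) : (∑ k ∈ Finset.Icc 1 n, k) * 2 = n * (n + 1) := by
  induction n with
  | zero => simp
  | succ p ih =>
    rw [← Finset.Ico_add_one_right_eq_Icc, Finset.sum_Ico_succ_top (by omega), Finset.Ico_add_one_right_eq_Icc,
      add_mul, ih]
    ring

open Polynomial Finset in
/-- Corollary: `Σ_{ℓ=0}^{12n} τ_n(ℓ(n+1)) = (n+1)^{23}·φ(n+1)`. -/
theorem stmt11 (n : ℕ) (hn : 0 < n) :
    ∑ l ∈ Finset.range (12 * n + 1), tau n (l * (n + 1)) =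
      (n + 1 : ℤ) ^ 23 * (Nat.totient (n + 1) : ℤ) := by
  set m : ℕ := n + 1 with hm_def
  have hm0 : m ≠ 0 := by omega
  have hmC : (m : ℂ) ≠ 0 := Nat.cast_ne_zero.mpr hm0
  obtain ⟨ζ, hζ⟩ : ∃ ζ : ℂ, IsPrimitiveRoot ζ m :=
    ⟨_, Complex.isPrimitiveRoot_exp m hm0⟩
  set P : Polynomial ℂ := ∏ k ∈ Finset.Icc 1 n, (1 - Polynomial.X ^ k) ^ 24 with hP
  have hcoeff : ∀ j, P.coeff j = ((tau n j : ℤ) : ℂ) := by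
    intro j
    have hmap : P = (∏ k ∈ Finset.Icc 1 n, (1 - Polynomial.X ^ k) ^ 24 : Polynomial ℤ).map
        (Int.castRingHom ℂ) := by
      rw [Polynomial.map_prod]
      refine Finset.prod_congr rfl fun k _ => ?_
      simp [Polynomial.map_pow]
    rw [hmap, Polynomial.coeff_map]
    rfl
  -- degree bound
  have hdeg : P.natDegree < 12 * n * m + 1 := by
    have h1 : P.natDegree ≤ ∑ k ∈ Finset.Icc 1 n, ((1 - (X : ℂ[X]) ^ k) ^ 24).natDegree :=
      Polynomial.natDegree_prod_le _ _
    have h2 : ∑ k ∈ Finset.Icc 1 n, ((1 - (X : ℂ[X]) ^ k) ^ 24).natDegree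
        ≤ ∑ k ∈ Finset.Icc 1 n, 24 * k := by
      refine Finset.sum_le_sum fun k _ => ?_
      refine le_trans (Polynomial.natDegree_pow_le) ?_
      have : (1 - (X : ℂ[X]) ^ k).natDegree ≤ k := by
        refine le_trans (Polynomial.natDegree_sub_le _ _) ?_
        simp
      exact Nat.mul_le_mul_left 24 this
    have h3 : ∑ k ∈ Finset.Icc 1 n, 24 * k = 12 * n * m := by
      have hg := sum_Icc_one_mul_two n
      rw [← Finset.mul_sum]
      calc 24 * ∑ k ∈ Finset.Icc 1 n, k = 12 * ((∑ k ∈ Finset.Icc 1 n, k) * 2) := by ring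
        _ = 12 * (n * (n + 1)) := by rw [hg]
        _ = 12 * n * m := by rw [hm_def]; ring
    omega
  have key : ∀ x : ℂ, P.eval x = ∑ j ∈ Finset.range (12 * n * m + 1), P.coeff j * x ^ j :=
    fun x => Polynomial.eval_eq_sum_range' hdeg x
  -- roots of unity filter
  have filt : ∀ j : ℕ, (∑ k ∈ Finset.range m, (ζ ^ j) ^ k) = if m ∣ j then (m : ℂ) else 0 := by
    intro j
    split_ifs with h
    · obtain ⟨c, rfl⟩ := h
      have h1 : ζ ^ (m * c) = 1 := by rw [pow_mul, hζ.pow_eq_one, one_pow]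
      simp [h1]
    · have hne : ζ ^ j ≠ 1 := fun hh => h ((hζ.pow_eq_one_iff_dvd j).mp hh)
      have hpow : (ζ ^ j) ^ m = 1 := by
        rw [← pow_mul, mul_comm, pow_mul, hζ.pow_eq_one, one_pow]
      rw [geom_sum_eq hne, hpow, sub_self, zero_div]
  -- LHS computation
  have T1 : ∑ k ∈ Finset.range m, P.eval (ζ ^ k)
      = (∑ l ∈ Finset.range (12 * n + 1), P.coeff (l * m)) * m := by
    calc ∑ k ∈ Finset.range m, P.eval (ζ ^ k)
        = ∑ k ∈ Finset.range m, ∑ j ∈ Finset.range (12 * n * m + 1), P.coeff j * (ζ ^ j) ^ k := by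
          refine Finset.sum_congr rfl fun k _ => ?_
          rw [key]
          refine Finset.sum_congr rfl fun j _ => ?_
          congr 1
          rw [← pow_mul, ← pow_mul, mul_comm]
      _ = ∑ j ∈ Finset.range (12 * n * m + 1), P.coeff j * ∑ k ∈ Finset.range m, (ζ ^ j) ^ k := by
          rw [Finset.sum_comm]
          exact Finset.sum_congr rfl fun j _ => (Finset.mul_sum _ _ _).symm
      _ = ∑ j ∈ Finset.range (12 * n * m + 1), (if m ∣ j then P.coeff j * m else 0) := by
          refine Finset.sum_congr rfl fun j _ => ?_
          rw [filt]
          split_ifs <;> simp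
      _ = ∑ j ∈ (Finset.range (12 * n * m + 1)).filter (fun j => m ∣ j),
            P.coeff j * m := by
          rw [Finset.sum_filter]
      _ = ∑ l ∈ Finset.range (12 * n + 1), P.coeff (l * m) * m := by
          refine Finset.sum_nbij' (fun j => j / m) (fun l => l * m) ?_ ?_ ?_ ?_ ?_
          · intro j hj
            rw [Finset.mem_filter, Finset.mem_range] at hj
            obtain ⟨hj1, c, rfl⟩ := hj
            simp only [Finset.mem_range, Nat.mul_div_cancel_left c (Nat.pos_of_ne_zero hm0)]
            by_contra hc
            push_neg at hc
            have hle : 12 * n * m + m ≤ m * c := by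
              calc 12 * n * m + m = m * (12 * n + 1) := by ring
                _ ≤ m * c := Nat.mul_le_mul_left m hc
            have hm1 : 1 ≤ m := Nat.pos_of_ne_zero hm0
            linarith
          · intro l hl
            rw [Finset.mem_range] at hl
            rw [Finset.mem_filter, Finset.mem_range]
            have hle : l * m ≤ 12 * n * m := Nat.mul_le_mul_right m (by omega)
            exact ⟨by linarith, ⟨l, mul_comm l m⟩⟩
          · intro j hj
            rw [Finset.mem_filter] at hj
            exact Nat.div_mul_cancel hj.2
          · intro l hl
            exact Nat.mul_div_cancel l (Nat.pos_of_ne_zero hm0)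
          · intro j hj
            rw [Finset.mem_filter] at hj
            rw [Nat.div_mul_cancel hj.2]
      _ = (∑ l ∈ Finset.range (12 * n + 1), P.coeff (l * m)) * m := by
          rw [Finset.sum_mul]
  -- RHS computation
  have heval : ∀ x : ℂ, P.eval x = ∏ t ∈ Finset.Icc 1 n, (1 - x ^ t) ^ 24 := by
    intro x
    rw [hP, Polynomial.eval_prod]
    refine Finset.prod_congr rfl fun t _ => ?_
    simp
  have T2 : ∑ k ∈ Finset.range m, P.eval (ζ ^ k) = (Nat.totient m : ℂ) * (m : ℂ) ^ 24 := by
    have step : ∀ k ∈ Finset.range m,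
        P.eval (ζ ^ k) = if m.Coprime k then (m : ℂ) ^ 24 else 0 := by
      intro k _
      rw [heval]
      split_ifs with hcop
      · have hprim : IsPrimitiveRoot (ζ ^ k) m := hζ.pow_of_coprime k hcop.symm
        rw [Finset.prod_pow]
        have hord : ∏ t ∈ Finset.range n, (1 - (ζ ^ k) ^ (t + 1)) = ((n : ℂ) + 1) :=
          hprim.prod_one_sub_pow_eq_order
        have hIcc : ∏ t ∈ Finset.Icc 1 n, (1 - (ζ ^ k) ^ t)
            = ∏ t ∈ Finset.range n, (1 - (ζ ^ k) ^ (t + 1)) := by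
          rw [← Finset.Ico_add_one_right_eq_Icc, Finset.prod_Ico_eq_prod_range]
          simp [add_comm]
        rw [hIcc, hord]
        norm_num [hm_def]
      · have hd1 : Nat.gcd m k ≠ 1 := hcop
        have hd0 : Nat.gcd m k ≠ 0 := fun h => hm0 (Nat.eq_zero_of_gcd_eq_zero_left h)
        set d := Nat.gcd m k with hd_def
        have hdm : d ∣ m := Nat.gcd_dvd_left m k
        have hdk : d ∣ k := Nat.gcd_dvd_right m k
        set e := m / d with he_def
        have hde : d * e = m := Nat.mul_div_cancel' hdm
        have he1 : 1 ≤ e := by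
          rcases Nat.eq_zero_or_pos e with h | h
          · exfalso; rw [h, mul_zero] at hde; omega
          · exact h
        have hen : e ≤ n := by
          have h2d : 2 ≤ d := by omega
          nlinarith
        refine Finset.prod_eq_zero (Finset.mem_Icc.mpr ⟨he1, hen⟩) ?_
        have hone : (ζ ^ k) ^ e = 1 := by
          obtain ⟨c, hc⟩ := hdk
          rw [← pow_mul]
          have : k * e = c * m := by rw [hc, ← hde]; ring
          rw [this, mul_comm, pow_mul, hζ.pow_eq_one, one_pow]
        rw [hone, sub_self]
        norm_num
    rw [Finset.sum_congr rfl step, Finset.sum_ite, Finset.sum_const_zero, add_zero,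
      Finset.sum_const, nsmul_eq_mul]
    congr 2
  -- combine
  have hEq : (∑ l ∈ Finset.range (12 * n + 1), P.coeff (l * m)) * m
      = (Nat.totient m : ℂ) * (m : ℂ) ^ 24 := by rw [← T1, T2]
  have hS : (∑ l ∈ Finset.range (12 * n + 1), P.coeff (l * m))
      = (Nat.totient m : ℂ) * (m : ℂ) ^ 23 := by
    have h24 : ((m : ℂ)) ^ 24 = (m : ℂ) ^ 23 * m := by ring
    rw [h24, ← mul_assoc] at hEq
    exact mul_right_cancel₀ hmC hEq
  have h1 : ∀ l ∈ Finset.range (12 * n + 1), ((tau n (l * (n + 1)) : ℤ) : ℂ) = P.coeff (l * m) :=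
    fun l _ => (hcoeff _).symm
  have hC : ((∑ l ∈ Finset.range (12 * n + 1), tau n (l * (n + 1)) : ℤ) : ℂ)
      = (((n + 1 : ℤ) ^ 23 * (Nat.totient (n + 1) : ℤ) : ℤ) : ℂ) := by
    push_cast
    rw [Finset.sum_congr rfl h1, hS, hm_def]
    push_cast
    ring
  exact_mod_cast hC
end
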